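/- Let A, Y, S be binary random variables and U finite-valued, on a discrete probability space. Assume S ⊥ A | (Y, U), and that there exists δ ∈ (0,1) such that P(Y=1 | A=a, U=u) ≤ δ for all a, u with P(A=a, U=u) > 0. Then for all a, u such that all conditioning events below have positive probability: 1 − δ < P(A=a | U=u, Y=0, S=1) / P(A=a | U=u) < 1/(1 − δ). -/

import Mathlib

open scoped BigOperators
open Real

attribute [local instance] Classical.propDecidable

noncomputable section

variable {Ω : Type*}

/-- Probability of an event under weight function `P` on a finite sample space. -/
def pr [Fintype Ω] (P : Ω → ℝ) (E : Ω → Prop) : ℝ :=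
  ∑ ω, if E ω then P ω else 0

/-- Conditional probability `P(E | F)`. -/
def cpr [Fintype Ω] (P : Ω → ℝ) (E F : Ω → Prop) : ℝ :=
  pr P (fun ω => E ω ∧ F ω) / pr P F

/-- Conditional expectation `E[f | F]`. -/
def cexp [Fintype Ω] (P : Ω → ℝ) (f : Ω → ℝ) (F : Ω → Prop) : ℝ :=
  (∑ ω, if F ω then f ω * P ω else 0) / pr P F

/-- Conditional independence `f ⊥ g | h` under `P`. -/
def CondIndep [Fintype Ω] (P : Ω → ℝ) {α β γ : Type*}
    (f : Ω → α) (g : Ω → β) (h : Ω → γ) : Prop :=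
  ∀ a b c, pr P (fun ω => h ω = c) ≠ 0 →
    cpr P (fun ω => f ω = a ∧ g ω = b) (fun ω => h ω = c) =
      cpr P (fun ω => f ω = a) (fun ω => h ω = c) *
        cpr P (fun ω => g ω = b) (fun ω => h ω = c)

lemma pr_nonneg' [Fintype Ω] (P : Ω → ℝ) (hP : ∀ ω, 0 ≤ P ω) (E : Ω → Prop) :
    0 ≤ pr P E := by
  apply Finset.sum_nonneg
  intro ω _
  split_ifs
  · exact hP ω
  · exact le_rfl

lemma pr_congr' [Fintype Ω] (P : Ω → ℝ) (E F : Ω → Prop) (h : ∀ ω, E ω ↔ F ω) :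
    pr P E = pr P F := by
  unfold pr
  apply Finset.sum_congr rfl
  intro ω _
  simp [h ω]

lemma pr_mono' [Fintype Ω] (P : Ω → ℝ) (hP : ∀ ω, 0 ≤ P ω) (E F : Ω → Prop)
    (h : ∀ ω, E ω → F ω) : pr P E ≤ pr P F := by
  apply Finset.sum_le_sum
  intro ω _
  by_cases hE : E ω
  · rw [if_pos hE, if_pos (h ω hE)]
  · rw [if_neg hE]
    split_ifs with hF
    · exact hP ω
    · exact le_rfl

lemma pr_split2 [Fintype Ω] (P : Ω → ℝ) (E : Ω → Prop) (f : Ω → ℕ) (x y : ℕ)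
    (hxy : x ≠ y) (hf : ∀ ω, f ω = x ∨ f ω = y) :
    pr P E = pr P (fun ω => E ω ∧ f ω = x) + pr P (fun ω => E ω ∧ f ω = y) := by
  unfold pr
  rw [← Finset.sum_add_distrib]
  apply Finset.sum_congr rfl
  intro ω _
  by_cases hE : E ω
  · rcases hf ω with h | h
    · simp [hE, h, hxy, Ne.symm hxy]
    · simp [hE, h, hxy, Ne.symm hxy]
  · simp [hE]

lemma final_algebra (δ m m' n n' t Q s sA : ℝ) (hδ0 : 0 < δ) (hδ1 : δ < 1)
    (hm : 0 < m) (hm' : 0 ≤ m') (hs : 0 < s) (hQ : 0 < Q)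
    (ht : t = m + m') (hQe : Q = n + n')
    (h1 : (1 - δ) * m ≤ n) (h2 : n ≤ m) (h3 : (1 - δ) * m' ≤ n') (h4 : n' ≤ m')
    (hind : sA * Q = s * n) :
    1 - δ < (sA / s) / (m / t) ∧ (sA / s) / (m / t) < 1 / (1 - δ) := by
  have hδ1' : 0 < 1 - δ := by linarith
  have hn : 0 < n := lt_of_lt_of_le (by nlinarith) h1
  have ht0 : 0 < t := by rw [ht]; linarith
  have hsA : sA / s = n / Q := by
    rw [div_eq_div_iff hs.ne' hQ.ne']
    linarith [hind]
  rw [hsA]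
  have hR : (n / Q) / (m / t) = (n * t) / (Q * m) := by
    field_simp
  rw [hR]
  subst ht hQe
  constructor
  · rw [lt_div_iff₀ (by positivity)]
    nlinarith [mul_pos hδ0 (mul_pos hn hm), mul_nonneg hm' (by linarith : (0:ℝ) ≤ n - (1 - δ) * m),
      mul_nonneg hm.le (by linarith : (0:ℝ) ≤ m' - n')]
  · rw [div_lt_div_iff₀ (by positivity) hδ1']
    nlinarith [mul_pos hδ0 (mul_pos hn hm),
      mul_nonneg (mul_nonneg hδ1'.le hm') (by linarith : (0:ℝ) ≤ m - n),
      mul_nonneg hm.le (by linarith : (0:ℝ) ≤ n' - (1 - δ) * m')]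

/-- Lemma S1(b): under the rare disease assumption and
treatment-independent sampling, the selected test-negative treatment
probability approximates the population one. -/
theorem stmt4 [Fintype Ω] {𝒰 : Type*} [Fintype 𝒰]
    (P : Ω → ℝ) (hP : ∀ ω, 0 ≤ P ω) (hPsum : ∑ ω, P ω = 1)
    (A Y S : Ω → ℕ) (U : Ω → 𝒰)
    (hA : ∀ ω, A ω = 0 ∨ A ω = 1) (hY : ∀ ω, Y ω = 0 ∨ Y ω = 1)
    (hS : ∀ ω, S ω = 0 ∨ S ω = 1)
    (hTIS : CondIndep P S A (fun ω => (Y ω, U ω)))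
    (δ : ℝ) (hδ : 0 < δ ∧ δ < 1)
    (hrare : ∀ (a : ℕ) (u : 𝒰), pr P (fun ω => A ω = a ∧ U ω = u) ≠ 0 →
      cpr P (fun ω => Y ω = 1) (fun ω => A ω = a ∧ U ω = u) ≤ δ) :
    ∀ (a : ℕ) (u : 𝒰), (a = 0 ∨ a = 1) →
      pr P (fun ω => A ω = a ∧ U ω = u) ≠ 0 →
      pr P (fun ω => U ω = u ∧ Y ω = 0 ∧ S ω = 1) ≠ 0 →
      1 - δ < cpr P (fun ω => A ω = a) (fun ω => U ω = u ∧ Y ω = 0 ∧ S ω = 1) /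
          cpr P (fun ω => A ω = a) (fun ω => U ω = u) ∧
        cpr P (fun ω => A ω = a) (fun ω => U ω = u ∧ Y ω = 0 ∧ S ω = 1) /
          cpr P (fun ω => A ω = a) (fun ω => U ω = u) < 1 / (1 - δ) := by
  obtain ⟨hδ0, hδ1⟩ := hδ
  intro a u ha hAU hSel
  set a' := 1 - a with ha'def
  have haa' : a ≠ a' := by rcases ha with h | h <;> simp [h, ha'def]
  have hAsplit : ∀ ω, A ω = a ∨ A ω = a' := by
    intro ω
    rcases ha with h | h <;> rcases hA ω with h2 | h2 <;> simp [ha'def, h, h2]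
  -- basic positivity
  have hm : 0 < pr P (fun ω => A ω = a ∧ U ω = u) :=
    lt_of_le_of_ne (pr_nonneg' P hP _) (Ne.symm hAU)
  have hs : 0 < pr P (fun ω => U ω = u ∧ Y ω = 0 ∧ S ω = 1) :=
    lt_of_le_of_ne (pr_nonneg' P hP _) (Ne.symm hSel)
  have hQs : pr P (fun ω => U ω = u ∧ Y ω = 0 ∧ S ω = 1) ≤
      pr P (fun ω => Y ω = 0 ∧ U ω = u) :=
    pr_mono' P hP _ _ (fun ω h => ⟨h.2.1, h.1⟩)
  have hQ : 0 < pr P (fun ω => Y ω = 0 ∧ U ω = u) := lt_of_lt_of_le hs hQs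
  -- rare disease bounds
  have hbound : ∀ b : ℕ,
      (1 - δ) * pr P (fun ω => A ω = b ∧ U ω = u) ≤
        pr P (fun ω => A ω = b ∧ Y ω = 0 ∧ U ω = u) ∧
      pr P (fun ω => A ω = b ∧ Y ω = 0 ∧ U ω = u) ≤
        pr P (fun ω => A ω = b ∧ U ω = u) := by
    intro b
    have hsplitY : pr P (fun ω => A ω = b ∧ U ω = u) =
        pr P (fun ω => (A ω = b ∧ U ω = u) ∧ Y ω = 0) +
          pr P (fun ω => (A ω = b ∧ U ω = u) ∧ Y ω = 1) :=
      pr_split2 P _ Y 0 1 (by norm_num) hY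
    have hc0 : pr P (fun ω => (A ω = b ∧ U ω = u) ∧ Y ω = 0) =
        pr P (fun ω => A ω = b ∧ Y ω = 0 ∧ U ω = u) :=
      pr_congr' P _ _ (fun ω => by tauto)
    rw [hc0] at hsplitY
    have hY1nn : 0 ≤ pr P (fun ω => (A ω = b ∧ U ω = u) ∧ Y ω = 1) :=
      pr_nonneg' P hP _
    by_cases hb : pr P (fun ω => A ω = b ∧ U ω = u) = 0
    · have hnn : 0 ≤ pr P (fun ω => A ω = b ∧ Y ω = 0 ∧ U ω = u) :=
        pr_nonneg' P hP _
      rw [hb]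
      constructor <;> nlinarith
    · have hpos : 0 < pr P (fun ω => A ω = b ∧ U ω = u) :=
        lt_of_le_of_ne (pr_nonneg' P hP _) (Ne.symm hb)
      have hrb := hrare b u hb
      unfold cpr at hrb
      rw [div_le_iff₀ hpos] at hrb
      have hc1 : pr P (fun ω => Y ω = 1 ∧ (A ω = b ∧ U ω = u)) =
          pr P (fun ω => (A ω = b ∧ U ω = u) ∧ Y ω = 1) :=
        pr_congr' P _ _ (fun ω => by tauto)
      rw [hc1] at hrb
      constructor <;> nlinarith
  -- splits of t and Q by treatment
  have ht : pr P (fun ω => U ω = u) =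
      pr P (fun ω => A ω = a ∧ U ω = u) + pr P (fun ω => A ω = a' ∧ U ω = u) := by
    rw [pr_split2 P (fun ω => U ω = u) A a a' haa' hAsplit]
    congr 1 <;> exact pr_congr' P _ _ (fun ω => by tauto)
  have hQe : pr P (fun ω => Y ω = 0 ∧ U ω = u) =
      pr P (fun ω => A ω = a ∧ Y ω = 0 ∧ U ω = u) +
        pr P (fun ω => A ω = a' ∧ Y ω = 0 ∧ U ω = u) := by
    rw [pr_split2 P (fun ω => Y ω = 0 ∧ U ω = u) A a a' haa' hAsplit]
    congr 1 <;> exact pr_congr' P _ _ (fun ω => by tauto)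
  -- conditional independence
  have hYU : ∀ ω : Ω, ((Y ω, U ω) = ((0 : ℕ), u)) ↔ (Y ω = 0 ∧ U ω = u) := by
    intro ω; simp [Prod.ext_iff]
  have hQne : pr P (fun ω => (Y ω, U ω) = ((0 : ℕ), u)) ≠ 0 := by
    rw [pr_congr' P _ _ hYU]; exact hQ.ne'
  have hind := hTIS 1 a ((0 : ℕ), u) hQne
  unfold cpr at hind
  have e1 : pr P (fun ω => (S ω = 1 ∧ A ω = a) ∧ (Y ω, U ω) = ((0 : ℕ), u)) =
      pr P (fun ω => A ω = a ∧ U ω = u ∧ Y ω = 0 ∧ S ω = 1) :=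
    pr_congr' P _ _ (fun ω => by rw [and_congr_right_iff.mpr (fun _ => hYU ω)]; tauto)
  have e2 : pr P (fun ω => S ω = 1 ∧ (Y ω, U ω) = ((0 : ℕ), u)) =
      pr P (fun ω => U ω = u ∧ Y ω = 0 ∧ S ω = 1) :=
    pr_congr' P _ _ (fun ω => by rw [and_congr_right_iff.mpr (fun _ => hYU ω)]; tauto)
  have e3 : pr P (fun ω => A ω = a ∧ (Y ω, U ω) = ((0 : ℕ), u)) =
      pr P (fun ω => A ω = a ∧ Y ω = 0 ∧ U ω = u) :=
    pr_congr' P _ _ (fun ω => by rw [and_congr_right_iff.mpr (fun _ => hYU ω)])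
  have e4 : pr P (fun ω => (Y ω, U ω) = ((0 : ℕ), u)) =
      pr P (fun ω => Y ω = 0 ∧ U ω = u) := pr_congr' P _ _ hYU
  rw [e1, e2, e3, e4] at hind
  have hindeq : pr P (fun ω => A ω = a ∧ U ω = u ∧ Y ω = 0 ∧ S ω = 1) *
      pr P (fun ω => Y ω = 0 ∧ U ω = u) =
      pr P (fun ω => U ω = u ∧ Y ω = 0 ∧ S ω = 1) *
        pr P (fun ω => A ω = a ∧ Y ω = 0 ∧ U ω = u) := by
    field_simp at hind
    apply mul_right_cancel₀ hQ.ne'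
    linear_combination (pr P (fun ω => Y ω = 0 ∧ U ω = u)) * hind
  obtain ⟨hba1, hba2⟩ := hbound a
  obtain ⟨hbb1, hbb2⟩ := hbound a'
  have hm'nn : 0 ≤ pr P (fun ω => A ω = a' ∧ U ω = u) := pr_nonneg' P hP _
  unfold cpr
  exact final_algebra δ _ _ _ _ _ _ _ _ hδ0 hδ1 hm hm'nn hs hQ ht hQe hba1 hba2
    hbb1 hbb2 hindeq
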